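/- arXiv:2112.09655 — 3 statements merged into one kernel-verified Lean document; each statement's English description precedes it below -/
import Mathlib

section
/- With probability at least 1−δ, ∫ |V(s) − V̄(φ(s))| dξ(s) ≤ γ L̂_P/(1−γ) + γε/(1+γK), where L̂_P = (1/T) Σ_{t<T} (1 − P̄(φ(S_t))(φ(S'_t))) is the empirical transition loss, provided K ≥ 0, ε, δ ∈ (0,1), and T ≥ ⌈−log(δ/4)·(1+γK)²/(2ε²(1−γ)²)⌉. -/
open MeasureTheory ProbabilityTheory

/-- Total variation distance between two measures on `X`:
the supremum over measurable sets of the absolute difference of their masses. -/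
noncomputable def tvDist {X : Type*} [MeasurableSpace X] (μ ν : Measure X) : ℝ :=
  ⨆ A : {A : Set X // MeasurableSet A}, |(μ A.1).toReal - (ν A.1).toReal|

lemma hoeff_pos {m : ℝ} (hm0 : 0 ≤ m) (hm1 : m ≤ 1) (t : ℝ) :
    0 < 1 - m + m * Real.exp t := by
  rcases eq_or_lt_of_le hm0 with h | h
  · simp [← h]
  · nlinarith [Real.exp_pos t, mul_pos h (Real.exp_pos t)]

lemma hoeff_aux_div {A B : ℝ} (hB : B ≠ 0) :
    (A * B - A * A) / B ^ 2 = A / B * (1 - A / B) := by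
  field_simp

lemma hoeff_log {m s : ℝ} (hm0 : 0 ≤ m) (hm1 : m ≤ 1) (hs : 0 ≤ s) :
    Real.log (1 - m + m * Real.exp s) - s * m ≤ s ^ 2 / 8 := by
  set F : ℝ → ℝ := fun t => 1 - m + m * Real.exp t with hF
  have hFpos : ∀ t, 0 < F t := hoeff_pos hm0 hm1
  have hFd : ∀ t, HasDerivAt F (m * Real.exp t) t := by
    intro t
    exact ((Real.hasDerivAt_exp t).const_mul m).const_add (1 - m)
  set p : ℝ → ℝ := fun t => m * Real.exp t / F t with hp
  have hpmem : ∀ t, 0 ≤ p t ∧ p t ≤ 1 := by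
    intro t
    constructor
    · exact div_nonneg (by positivity) (hFpos t).le
    · rw [hp]
      simp only
      rw [div_le_one (hFpos t)]
      show m * Real.exp t ≤ 1 - m + m * Real.exp t
      linarith
  set G1 : ℝ → ℝ := fun t => p t - m with hG1
  have hG1d : ∀ t, HasDerivAt G1 (p t * (1 - p t)) t := by
    intro t
    have h1 : HasDerivAt (fun u => m * Real.exp u) (m * Real.exp t) t :=
      (Real.hasDerivAt_exp t).const_mul m
    have h2 := h1.div (hFd t) (hFpos t).ne'
    have h3 : (m * Real.exp t * F t - m * Real.exp t * (m * Real.exp t)) / F t ^ 2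
        = p t * (1 - p t) := by
      rw [hp]
      exact hoeff_aux_div (hFpos t).ne'
    rw [h3] at h2
    exact h2.sub_const m
  set G : ℝ → ℝ := fun t => Real.log (F t) - t * m with hGdef
  have hGd : ∀ t, HasDerivAt G (G1 t) t := by
    intro t
    have h1 := (hFd t).log (hFpos t).ne'
    have h2 : HasDerivAt (fun u : ℝ => u * m) m t := by
      simpa using (hasDerivAt_id t).mul_const m
    exact h1.sub h2
  have step1 : ∀ t, 0 ≤ t → G1 t ≤ t / 4 := by
    intro t ht
    have hH1d : ∀ u, HasDerivAt (fun v => v / 4 - G1 v) (1 / 4 - p u * (1 - p u)) u := by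
      intro u
      exact ((hasDerivAt_id u).div_const 4).sub (hG1d u)
    have hmono : Monotone (fun v => v / 4 - G1 v) := by
      apply monotone_of_deriv_nonneg (fun u => (hH1d u).differentiableAt)
      intro u
      rw [(hH1d u).deriv]
      obtain ⟨h0, h1⟩ := hpmem u
      nlinarith [sq_nonneg (p u - 1/2)]
    have h0 : (fun v => v / 4 - G1 v) 0 = 0 := by
      simp [hG1, hp, hF]
    have hmt := hmono ht
    rw [h0] at hmt
    linarith [hmt]
  have hH2d : ∀ u, HasDerivAt (fun t => t ^ 2 / 8 - G t) (u / 4 - G1 u) u := by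
    intro u
    have h1 : HasDerivAt (fun t : ℝ => t ^ 2 / 8) (u / 4) u := by
      have h := (hasDerivAt_pow 2 u).div_const 8
      refine h.congr_deriv ?_
      push_cast
      ring
    exact h1.sub (hGd u)
  have hdiff : Differentiable ℝ (fun t => t ^ 2 / 8 - G t) :=
    fun u => (hH2d u).differentiableAt
  have hmono : MonotoneOn (fun t => t ^ 2 / 8 - G t) (Set.Ici 0) := by
    apply monotoneOn_of_deriv_nonneg (convex_Ici 0) hdiff.continuous.continuousOn
      hdiff.differentiableOn
    intro u hu
    rw [interior_Ici] at hu
    rw [(hH2d u).deriv]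
    linarith [step1 u hu.le]
  have h0 : (fun t => t ^ 2 / 8 - G t) 0 = 0 := by
    simp [hGdef, hF]
  have hm := hmono (Set.self_mem_Ici) (Set.mem_Ici.mpr hs) hs
  rw [h0] at hm
  have : G s ≤ s ^ 2 / 8 := by
    simpa using hm
  simpa [hGdef, hF] using this

lemma integrable_of_bdd {α : Type*} [MeasurableSpace α] {μ : MeasureTheory.Measure α}
    [MeasureTheory.IsFiniteMeasure μ] {f : α → ℝ} (hf : MeasureTheory.AEStronglyMeasurable f μ)
    {C : ℝ} (h : ∀ x, |f x| ≤ C) : MeasureTheory.Integrable f μ :=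
  (MeasureTheory.integrable_const C).mono' hf (Filter.Eventually.of_forall fun x => by
    simpa using h x)

open MeasureTheory ProbabilityTheory in
lemma hoeff_mgf {Ω : Type*} [MeasurableSpace Ω] (μ : Measure Ω) [IsProbabilityMeasure μ]
    {X : Ω → ℝ} (hX : Measurable X) (h0 : ∀ ω, 0 ≤ X ω) (h1 : ∀ ω, X ω ≤ 1)
    {s : ℝ} (hs : 0 ≤ s) :
    mgf (fun ω => X ω - ∫ x, X x ∂μ) μ s ≤ Real.exp (s ^ 2 / 8) := by
  have hXint : Integrable X μ :=
    integrable_of_bdd hX.aestronglyMeasurable (C := 1)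
      (fun ω => abs_le.mpr ⟨by linarith [h0 ω], h1 ω⟩)
  set m := ∫ x, X x ∂μ with hm
  have hm0 : 0 ≤ m := integral_nonneg h0
  have hm1 : m ≤ 1 := by
    have := integral_mono hXint (integrable_const 1) h1
    simpa using this
  have hexpint : Integrable (fun ω => Real.exp (s * X ω)) μ :=
    integrable_of_bdd ((hX.const_mul s).exp).aestronglyMeasurable (C := Real.exp s)
      (fun ω => by
        rw [abs_of_pos (Real.exp_pos _), Real.exp_le_exp]
        nlinarith [h0 ω, h1 ω])
  have key : ∫ ω, Real.exp (s * X ω) ∂μ ≤ 1 - m + m * Real.exp s := by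
    have pt : ∀ ω, Real.exp (s * X ω) ≤ 1 - X ω + X ω * Real.exp s := by
      intro ω
      have hc := convexOn_exp.2 (Set.mem_univ (0:ℝ)) (Set.mem_univ s)
        (by linarith [h1 ω] : (0:ℝ) ≤ 1 - X ω) (h0 ω) (by ring)
      simpa [smul_eq_mul, mul_comm] using hc
    calc ∫ ω, Real.exp (s * X ω) ∂μ ≤ ∫ ω, (1 - X ω + X ω * Real.exp s) ∂μ := by
          have i1 : Integrable (fun ω => 1 - X ω) μ := (integrable_const 1).sub hXint
          exact integral_mono hexpint (i1.add (hXint.mul_const _)) pt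
      _ = 1 - m + m * Real.exp s := by
          have i1 : Integrable (fun ω => 1 - X ω) μ := (integrable_const 1).sub hXint
          rw [integral_add i1 (hXint.mul_const _),
            integral_sub (integrable_const 1) hXint, integral_mul_const]
          simp [hm]
  have hmgf : mgf (fun ω => X ω - m) μ s
      = (∫ ω, Real.exp (s * X ω) ∂μ) * Real.exp (-(s * m)) := by
    unfold mgf
    simp_rw [mul_sub, sub_eq_add_neg, Real.exp_add]
    rw [integral_mul_const]
  rw [hmgf]
  have hFpos := hoeff_pos hm0 hm1 s
  calc (∫ ω, Real.exp (s * X ω) ∂μ) * Real.exp (-(s * m))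
      ≤ (1 - m + m * Real.exp s) * Real.exp (-(s * m)) := by
        apply mul_le_mul_of_nonneg_right key (Real.exp_pos _).le
    _ = Real.exp (Real.log (1 - m + m * Real.exp s) - s * m) := by
        rw [Real.exp_sub, Real.exp_log hFpos, div_eq_mul_inv, ← Real.exp_neg]
    _ ≤ Real.exp (s ^ 2 / 8) := by
        rw [Real.exp_le_exp]
        exact hoeff_log hm0 hm1 hs

open MeasureTheory ProbabilityTheory in
lemma hoeff_tail {Ω : Type*} [MeasurableSpace Ω] (μ : Measure Ω) [IsProbabilityMeasure μ]
    {T : ℕ} {Y : Fin T → Ω → ℝ} (hmeas : ∀ t, Measurable (Y t))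
    (h0 : ∀ t ω, 0 ≤ Y t ω) (h1 : ∀ t ω, Y t ω ≤ 1)
    (hindep : iIndepFun Y μ)
    {c : ℝ} (hc : 0 < c) :
    (μ {ω | (T : ℝ) * c ≤ ∑ t, (Y t ω - ∫ x, Y t x ∂μ)}).toReal
      ≤ Real.exp (-2 * T * c ^ 2) := by
  set W : Fin T → Ω → ℝ := fun t ω => Y t ω - ∫ x, Y t x ∂μ with hW
  have hWmeas : ∀ t, Measurable (W t) := fun t => (hmeas t).sub_const _
  have hWindep : iIndepFun W μ :=
    hindep.comp (fun t x => x - ∫ x, Y t x ∂μ) (fun t => measurable_id.sub_const _)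
  have hWbdd : ∀ t ω, |W t ω| ≤ 1 := by
    intro t ω
    have hm0 : 0 ≤ ∫ x, Y t x ∂μ := integral_nonneg (h0 t)
    have hm1 : (∫ x, Y t x ∂μ) ≤ 1 := by
      have hXint : Integrable (Y t) μ :=
        integrable_of_bdd (hmeas t).aestronglyMeasurable (C := 1)
          (fun ω => abs_le.mpr ⟨by linarith [h0 t ω], h1 t ω⟩)
      simpa using integral_mono hXint (integrable_const 1) (h1 t)
    rw [abs_le]
    constructor <;> simp only [hW] <;> [linarith [h0 t ω]; linarith [h1 t ω]]
  set s0 : ℝ := 4 * c with hs0def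
  have hs0 : 0 ≤ s0 := by positivity
  have hint : ∀ t, Integrable (fun ω => Real.exp (s0 * W t ω)) μ := by
    intro t
    apply integrable_of_bdd (((hWmeas t).const_mul s0).exp).aestronglyMeasurable
      (C := Real.exp s0)
    intro ω
    rw [abs_of_pos (Real.exp_pos _), Real.exp_le_exp]
    have := (abs_le.mp (hWbdd t ω)).2
    nlinarith
  have hsum_int : Integrable (fun ω => Real.exp (s0 * (∑ t, W t) ω)) μ :=
    hWindep.integrable_exp_mul_sum hWmeas (fun t _ => hint t)
  have hcher := measure_ge_le_exp_mul_mgf (μ := μ) (X := ∑ t, W t) ((T : ℝ) * c) hs0 hsum_int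
  have hmgfsum : mgf (∑ t, W t) μ s0 = ∏ t, mgf (W t) μ s0 :=
    hWindep.mgf_sum hWmeas Finset.univ
  have hprod : (∏ t : Fin T, mgf (W t) μ s0) ≤ Real.exp ((T : ℝ) * s0 ^ 2 / 8) := by
    calc (∏ t : Fin T, mgf (W t) μ s0) ≤ ∏ _t : Fin T, Real.exp (s0 ^ 2 / 8) := by
          apply Finset.prod_le_prod (fun t _ => mgf_nonneg)
          intro t _
          exact hoeff_mgf μ (hmeas t) (h0 t) (h1 t) hs0
      _ = Real.exp ((T : ℝ) * s0 ^ 2 / 8) := by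
          rw [Finset.prod_const, Finset.card_univ, Fintype.card_fin, ← Real.exp_nat_mul]
          ring_nf
  have hset : {ω | (T : ℝ) * c ≤ ∑ t, (Y t ω - ∫ x, Y t x ∂μ)}
      = {ω | (T : ℝ) * c ≤ (∑ t, W t) ω} := by
    ext ω
    simp [hW, Finset.sum_apply]
  rw [hset]
  calc (μ {ω | (T : ℝ) * c ≤ (∑ t, W t) ω}).toReal
      ≤ Real.exp (-s0 * ((T : ℝ) * c)) * mgf (∑ t, W t) μ s0 := hcher
    _ ≤ Real.exp (-s0 * ((T : ℝ) * c)) * Real.exp ((T : ℝ) * s0 ^ 2 / 8) := by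
        apply mul_le_mul_of_nonneg_left _ (Real.exp_pos _).le
        rw [hmgfsum]
        exact hprod
    _ = Real.exp (-2 * T * c ^ 2) := by
        rw [← Real.exp_add]
        congr 1
        rw [hs0def]
        ring

open MeasureTheory ProbabilityTheory in
lemma integral_comp_fin {α : Type*} [MeasurableSpace α] (μ : Measure α) [IsProbabilityMeasure μ]
    {Sb : Type*} [Fintype Sb] [MeasurableSpace Sb] [MeasurableSingletonClass Sb]
    (φ : α → Sb) (hφ : Measurable φ) (g : Sb → ℝ) :
    ∫ x, g (φ x) ∂μ = ∑ y, (μ (φ ⁻¹' {y})).toReal * g y := by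
  rw [← integral_map hφ.aemeasurable (measurable_of_countable g).aestronglyMeasurable]
  haveI : IsProbabilityMeasure (μ.map φ) := Measure.isProbabilityMeasure_map hφ.aemeasurable
  rw [integral_fintype]
  refine Finset.sum_congr rfl (fun y _ => ?_)
  rw [measureReal_def, Measure.map_apply hφ (measurableSet_singleton y), smul_eq_mul]
  exact Integrable.of_finite

open MeasureTheory in
lemma sum_preimage_one {α : Type*} [MeasurableSpace α] (μ : Measure α) [IsProbabilityMeasure μ]
    {Sb : Type*} [Fintype Sb] [MeasurableSpace Sb] [MeasurableSingletonClass Sb]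
    (φ : α → Sb) (hφ : Measurable φ) :
    ∑ y, (μ (φ ⁻¹' {y})).toReal = 1 := by
  have h := integral_comp_fin μ φ hφ (fun _ => (1 : ℝ))
  simpa using h.symm

lemma pmf_sum_one {Sb : Type*} [Fintype Sb] (p : PMF Sb) :
    ∑ y, (p y).toReal = 1 := by
  have h := p.tsum_coe
  rw [tsum_fintype] at h
  rw [← ENNReal.toReal_sum (fun a _ => p.apply_ne_top a), h, ENNReal.toReal_one]

lemma tri_ineq {a b f : ℝ} (ha0 : 0 ≤ a) (ha1 : a ≤ 1) (hb0 : 0 ≤ b) (hb1 : b ≤ 1)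
    (hf0 : 0 ≤ f) (hf1 : f ≤ 1) : a * f - b * f ≤ a * (1 - b) := by
  nlinarith [mul_nonneg (mul_nonneg (sub_nonneg.mpr hf1) ha0) (sub_nonneg.mpr hb1),
    mul_nonneg (mul_nonneg hf0 hb0) (sub_nonneg.mpr ha1)]

lemma sum_abs_le {Sb : Type*} [Fintype Sb] (mf n f : Sb → ℝ)
    (hm0 : ∀ y, 0 ≤ mf y) (hm1 : ∀ y, mf y ≤ 1) (hms : ∑ y, mf y = 1)
    (hn0 : ∀ y, 0 ≤ n y) (hn1 : ∀ y, n y ≤ 1) (hns : ∑ y, n y = 1)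
    (hf0 : ∀ y, 0 ≤ f y) (hf1 : ∀ y, f y ≤ 1) :
    |∑ y, mf y * f y - ∑ y, n y * f y| ≤ ∑ y, mf y * (1 - n y) := by
  have hsym : ∑ y, n y * (1 - mf y) = ∑ y, mf y * (1 - n y) := by
    simp only [mul_sub, mul_one]
    rw [Finset.sum_sub_distrib, Finset.sum_sub_distrib, hms, hns]
    congr 1
    exact Finset.sum_congr rfl (fun y _ => mul_comm _ _)
  rw [abs_le]
  constructor
  · have h1 : ∑ y, n y * f y - ∑ y, mf y * f y ≤ ∑ y, n y * (1 - mf y) := by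
      rw [← Finset.sum_sub_distrib]
      exact Finset.sum_le_sum (fun y _ =>
        tri_ineq (hn0 y) (hn1 y) (hm0 y) (hm1 y) (hf0 y) (hf1 y))
    rw [hsym] at h1
    linarith
  · rw [← Finset.sum_sub_distrib]
    exact Finset.sum_le_sum (fun y _ =>
      tri_ineq (hm0 y) (hm1 y) (hn0 y) (hn1 y) (hf0 y) (hf1 y))

open MeasureTheory ProbabilityTheory in
lemma value_diff_bound
    {S : Type*} [MeasurableSpace S]
    {Sb : Type*} [Fintype Sb] [MeasurableSpace Sb] [DiscreteMeasurableSpace Sb]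
    (P : Kernel S S) [IsMarkovKernel P]
    (Pb : Sb → PMF Sb)
    (φ : S → Sb) (hφ : Measurable φ)
    (ξ : Measure S) [IsProbabilityMeasure ξ]
    (hinv : ∀ A : Set S, MeasurableSet A → ξ A = ∫⁻ s, P s A ∂ξ)
    (γ : ℝ) (hγ0 : 0 ≤ γ) (hγ1 : γ < 1)
    (Bb : Set Sb)
    (V : S → ℝ) (hVmeas : Measurable V)
    (hV0 : ∀ s, 0 ≤ V s) (hV1 : ∀ s, V s ≤ 1)
    (hVtarget : ∀ s, φ s ∈ Bb → V s = 1)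
    (hVbellman : ∀ s, φ s ∉ Bb → V s = γ * ∫ s', V s' ∂(P s))
    (Vb : Sb → ℝ) (hVb0 : ∀ x, 0 ≤ Vb x) (hVb1 : ∀ x, Vb x ≤ 1)
    (hVbtarget : ∀ x ∈ Bb, Vb x = 1)
    (hVbbellman : ∀ x, x ∉ Bb → Vb x = γ * ∑ y, ((Pb x) y).toReal * Vb y) :
    ∫ s, |V s - Vb (φ s)| ∂ξ ≤
      γ * (∫ z, (1 - ((Pb (φ z.1)) (φ z.2)).toReal) ∂(ξ.compProd P)) / (1 - γ) := by
  have hn0 : ∀ x y, (0 : ℝ) ≤ ((Pb x) y).toReal := fun x y => ENNReal.toReal_nonneg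
  have hn1 : ∀ x y, ((Pb x) y).toReal ≤ 1 := by
    intro x y
    have h := (Pb x).coe_le_one y
    simpa using ENNReal.toReal_mono ENNReal.one_ne_top h
  set W : S → ℝ := fun s => |V s - Vb (φ s)| with hWdef
  have hVbφ : Measurable fun s => Vb (φ s) := (measurable_of_countable Vb).comp hφ
  have hWmeas : Measurable W := (hVmeas.sub hVbφ).abs
  have hW0 : ∀ s, 0 ≤ W s := fun s => abs_nonneg _
  have hW1 : ∀ s, W s ≤ 1 := by
    intro s
    rw [hWdef]
    simp only [abs_le]
    constructor <;> nlinarith [hV0 s, hV1 s, hVb0 (φ s), hVb1 (φ s)]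
  have hWint : ∀ (μ : Measure S) [IsProbabilityMeasure μ], Integrable W μ := by
    intro μ _
    exact integrable_of_bdd hWmeas.aestronglyMeasurable (C := 1)
      (fun s => by rw [abs_of_nonneg (hW0 s)]; exact hW1 s)
  set h : S × S → ℝ := fun z => 1 - ((Pb (φ z.1)) (φ z.2)).toReal with hhdef
  have hhmeas : Measurable h := by
    apply measurable_const.sub
    exact (measurable_of_countable (fun q : Sb × Sb => ((Pb q.1) q.2).toReal)).comp
      ((hφ.comp measurable_fst).prodMk (hφ.comp measurable_snd))
  have hh0 : ∀ z, 0 ≤ h z := fun z => by simp [hhdef, hn1]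
  have hh1 : ∀ z, h z ≤ 1 := fun z => by simp [hhdef, hn0]
  set g : S → ℝ := fun s => ∫ s', h (s, s') ∂(P s) with hgdef
  have hg0 : ∀ s, 0 ≤ g s := fun s => integral_nonneg (fun s' => hh0 _)
  have hhsint : ∀ s : S, Integrable (fun s' => h (s, s')) (P s) := by
    intro s
    have hm : Measurable fun s' => h (s, s') := hhmeas.comp measurable_prodMk_left
    exact integrable_of_bdd hm.aestronglyMeasurable (C := 1)
      (fun s' => abs_le.mpr ⟨by linarith [hh0 (s, s')], hh1 (s, s')⟩)
  have hg1 : ∀ s, g s ≤ 1 := by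
    intro s
    have := integral_mono (hhsint s) (integrable_const 1) (fun s' => hh1 (s, s'))
    simpa using this
  -- pointwise inequality
  have hkey : ∀ s, W s ≤ γ * (∫ s', W s' ∂(P s)) + γ * g s := by
    intro s
    by_cases hBs : φ s ∈ Bb
    · have hz : W s = 0 := by
        simp [hWdef, hVtarget s hBs, hVbtarget _ hBs]
      rw [hz]
      have h1 : 0 ≤ ∫ s', W s' ∂(P s) := integral_nonneg hW0
      exact add_nonneg (mul_nonneg hγ0 h1) (mul_nonneg hγ0 (hg0 s))
    · set m : Sb → ℝ := fun y => ((P s) (φ ⁻¹' {y})).toReal with hmdef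
      set n : Sb → ℝ := fun y => ((Pb (φ s)) y).toReal with hndef
      have hm0 : ∀ y, 0 ≤ m y := fun y => ENNReal.toReal_nonneg
      have hm1 : ∀ y, m y ≤ 1 := by
        intro y
        have h := prob_le_one (μ := P s) (s := φ ⁻¹' {y})
        simpa using ENNReal.toReal_mono ENNReal.one_ne_top h
      have hms : ∑ y, m y = 1 := sum_preimage_one (P s) φ hφ
      have hns : ∑ y, n y = 1 := pmf_sum_one (Pb (φ s))
      have hVint : Integrable V (P s) :=
        integrable_of_bdd hVmeas.aestronglyMeasurable (C := 1)
          (fun x => abs_le.mpr ⟨by linarith [hV0 x], hV1 x⟩)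
      have hVbφint : Integrable (fun s' => Vb (φ s')) (P s) :=
        integrable_of_bdd hVbφ.aestronglyMeasurable (C := 1)
          (fun x => abs_le.mpr ⟨by linarith [hVb0 (φ x)], hVb1 (φ x)⟩)
      have hVbrep : ∫ s', Vb (φ s') ∂(P s) = ∑ y, m y * Vb y :=
        integral_comp_fin (P s) φ hφ Vb
      have hgrep : g s = ∑ y, m y * (1 - n y) := by
        rw [hgdef]
        exact integral_comp_fin (P s) φ hφ (fun y => 1 - n y)
      have hsplit : ∫ s', V s' ∂(P s) - ∑ y, n y * Vb y
          = (∫ s', (V s' - Vb (φ s')) ∂(P s)) + (∑ y, m y * Vb y - ∑ y, n y * Vb y) := by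
        rw [integral_sub hVint hVbφint, hVbrep]
        ring
      have habs1 : |∫ s', (V s' - Vb (φ s')) ∂(P s)| ≤ ∫ s', W s' ∂(P s) := by
        simpa [hWdef, Real.norm_eq_abs] using
          norm_integral_le_integral_norm (μ := P s) (fun s' => V s' - Vb (φ s'))
      have habs2 : |∑ y, m y * Vb y - ∑ y, n y * Vb y| ≤ ∑ y, m y * (1 - n y) :=
        sum_abs_le m n Vb hm0 hm1 hms (fun y => hn0 _ y) (fun y => hn1 _ y) hns hVb0 hVb1
      have hWs : W s = γ * |∫ s', V s' ∂(P s) - ∑ y, n y * Vb y| := by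
        rw [hWdef]
        simp only
        rw [hVbellman s hBs, hVbbellman (φ s) hBs, ← mul_sub, abs_mul, abs_of_nonneg hγ0]
      rw [hWs, hgrep]
      have htri : |∫ s', V s' ∂(P s) - ∑ y, n y * Vb y|
          ≤ (∫ s', W s' ∂(P s)) + ∑ y, m y * (1 - n y) := by
        rw [hsplit]
        calc |(∫ s', (V s' - Vb (φ s')) ∂(P s)) + (∑ y, m y * Vb y - ∑ y, n y * Vb y)|
            ≤ |∫ s', (V s' - Vb (φ s')) ∂(P s)| + |∑ y, m y * Vb y - ∑ y, n y * Vb y| :=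
              abs_add_le _ _
          _ ≤ (∫ s', W s' ∂(P s)) + ∑ y, m y * (1 - n y) := add_le_add habs1 habs2
      nlinarith [htri]
  -- integrate the pointwise inequality
  have hWPmeas : StronglyMeasurable fun s => ∫ s', W s' ∂(P s) :=
    StronglyMeasurable.integral_kernel_prod_right' (κ := P)
      ((hWmeas.comp measurable_snd).stronglyMeasurable)
  have hWP1 : ∀ s, |∫ s', W s' ∂(P s)| ≤ 1 := by
    intro s
    rw [abs_of_nonneg (integral_nonneg hW0)]
    simpa using integral_mono (hWint (P s)) (integrable_const 1) hW1
  have hWPint : Integrable (fun s => ∫ s', W s' ∂(P s)) ξ :=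
    integrable_of_bdd hWPmeas.aestronglyMeasurable (C := 1) hWP1
  have hgmeas : StronglyMeasurable g :=
    StronglyMeasurable.integral_kernel_prod_right' (κ := P) hhmeas.stronglyMeasurable
  have hgint : Integrable g ξ :=
    integrable_of_bdd hgmeas.aestronglyMeasurable (C := 1)
      (fun s => abs_le.mpr ⟨by linarith [hg0 s], hg1 s⟩)
  have hmono : ∫ s, W s ∂ξ ≤ ∫ s, (γ * (∫ s', W s' ∂(P s)) + γ * g s) ∂ξ :=
    integral_mono (hWint ξ) ((hWPint.const_mul γ).add (hgint.const_mul γ)) hkey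
  rw [integral_add (hWPint.const_mul γ) (hgint.const_mul γ), integral_const_mul,
    integral_const_mul] at hmono
  -- identify the two integrals
  have hhint : Integrable h (ξ.compProd P) :=
    integrable_of_bdd hhmeas.aestronglyMeasurable (C := 1)
      (fun z => abs_le.mpr ⟨by linarith [hh0 z], hh1 z⟩)
  have hWsnd : Integrable (fun z : S × S => W z.2) (ξ.compProd P) :=
    integrable_of_bdd (hWmeas.comp measurable_snd).aestronglyMeasurable (C := 1)
      (fun z => by rw [abs_of_nonneg (hW0 _)]; exact hW1 _)
  have hswap2 : ∫ s, g s ∂ξ = ∫ z, h z ∂(ξ.compProd P) :=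
    (MeasureTheory.Measure.integral_compProd hhint).symm
  have hsnd : (ξ.compProd P).map Prod.snd = ξ := by
    ext A hA
    rw [Measure.map_apply measurable_snd hA,
      Measure.compProd_apply (measurable_snd hA)]
    have hpre : ∀ a : S, Prod.mk a ⁻¹' (Prod.snd ⁻¹' A) = A := fun a => rfl
    simp_rw [hpre]
    exact (hinv A hA).symm
  have hswap1 : ∫ s, (∫ s', W s' ∂(P s)) ∂ξ = ∫ s, W s ∂ξ := by
    calc ∫ s, (∫ s', W s' ∂(P s)) ∂ξ
        = ∫ z, W z.2 ∂(ξ.compProd P) :=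
          (MeasureTheory.Measure.integral_compProd hWsnd).symm
      _ = ∫ s, W s ∂((ξ.compProd P).map Prod.snd) :=
          (integral_map measurable_snd.aemeasurable hWmeas.aestronglyMeasurable).symm
      _ = ∫ s, W s ∂ξ := by rw [hsnd]
  rw [hswap1, hswap2] at hmono
  have hD0 : 0 ≤ ∫ s, W s ∂ξ := integral_nonneg hW0
  rw [le_div_iff₀ (by linarith : (0:ℝ) < 1 - γ)]
  nlinarith [hmono]

/-- PAC value-difference theorem for discounted reachability: with probability at least `1-δ`
over `T ≥ ⌈-log(δ/4)·(1+γK)²/(2ε²(1-γ)²)⌉` i.i.d. sample pairs drawn from `ξ ⊗ P`, the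
expected value difference between the ground and latent reachability values is bounded by
`γ·L̂_P/(1-γ) + γ·ε/(1+γK)`, where `L̂_P` is the empirical transition loss. -/
theorem pac_value_difference_reachability
    {S : Type*} [MeasurableSpace S]
    {Sb : Type*} [Fintype Sb] [Nonempty Sb] [MeasurableSpace Sb] [DiscreteMeasurableSpace Sb]
    (P : Kernel S S) [IsMarkovKernel P]
    (Pb : Sb → PMF Sb)
    (φ : S → Sb) (hφ : Measurable φ)
    (ξ : Measure S) [IsProbabilityMeasure ξ]
    (hinv : ∀ A : Set S, MeasurableSet A → ξ A = ∫⁻ s, P s A ∂ξ)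
    (γ : ℝ) (hγ0 : 0 ≤ γ) (hγ1 : γ < 1)
    (Bb : Set Sb)
    (V : S → ℝ) (hVmeas : Measurable V)
    (hV0 : ∀ s, 0 ≤ V s) (hV1 : ∀ s, V s ≤ 1)
    (hVtarget : ∀ s, φ s ∈ Bb → V s = 1)
    (hVbellman : ∀ s, φ s ∉ Bb → V s = γ * ∫ s', V s' ∂(P s))
    (Vb : Sb → ℝ) (hVb0 : ∀ x, 0 ≤ Vb x) (hVb1 : ∀ x, Vb x ≤ 1)
    (hVbtarget : ∀ x ∈ Bb, Vb x = 1)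
    (hVbbellman : ∀ x, x ∉ Bb → Vb x = γ * ∑ y, ((Pb x) y).toReal * Vb y)
    (K : ℝ) (hK : 0 ≤ K)
    (ε δ : ℝ) (hε : ε ∈ Set.Ioo (0 : ℝ) 1) (hδ : δ ∈ Set.Ioo (0 : ℝ) 1)
    {Ω : Type*} [MeasurableSpace Ω] (Pr : Measure Ω) [IsProbabilityMeasure Pr]
    (T : ℕ) (Z : Fin T → Ω → S × S)
    (hZmeas : ∀ t, Measurable (Z t))
    (hZindep : iIndepFun Z Pr)
    (hZlaw : ∀ t, Pr.map (Z t) = ξ.compProd P)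
    (hT : ⌈-Real.log (δ / 4) * (1 + γ * K) ^ 2 / (2 * ε ^ 2 * (1 - γ) ^ 2)⌉₊ ≤ T) :
    ENNReal.ofReal (1 - δ) ≤
      Pr {ω | ∫ s, |V s - Vb (φ s)| ∂ξ ≤
        γ * ((1 / (T : ℝ)) *
            ∑ t, (1 - ((Pb (φ (Z t ω).1)) (φ (Z t ω).2)).toReal)) / (1 - γ) +
          γ * ε / (1 + γ * K)} := by
  obtain ⟨hε0, hε1⟩ := hε
  obtain ⟨hδ0, hδ1⟩ := hδ
  have hγK : (0 : ℝ) < 1 + γ * K := by nlinarith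
  have h1γ : (0 : ℝ) < 1 - γ := by linarith
  -- the deviation parameter
  set c : ℝ := ε * (1 - γ) / (1 + γ * K) with hcdef
  have hc : 0 < c := by positivity
  -- T is at least the required sample size, and positive
  set a : ℝ := -Real.log (δ / 4) * (1 + γ * K) ^ 2 / (2 * ε ^ 2 * (1 - γ) ^ 2) with hadef
  have hlog : 0 < -Real.log (δ / 4) := by
    have : Real.log (δ / 4) < 0 := Real.log_neg (by linarith) (by linarith)
    linarith
  have ha : 0 < a := by positivity
  have haT : a ≤ (T : ℝ) := Nat.ceil_le.mp hT
  have hTpos : 0 < T := by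
    by_contra hcon
    push_neg at hcon
    interval_cases T
    · simp at haT; linarith
  have hTR : (0 : ℝ) < T := by exact_mod_cast hTpos
  -- the tail probability is at most δ
  have hexp : Real.exp (-2 * T * c ^ 2) ≤ δ := by
    have hc2 : 2 * a * c ^ 2 = -Real.log (δ / 4) := by
      rw [hadef, hcdef]
      field_simp
    have h1 : -Real.log (δ / 4) ≤ 2 * T * c ^ 2 := by
      rw [← hc2]
      have : 0 < c ^ 2 := by positivity
      nlinarith
    have h2 : -Real.log δ ≤ -Real.log (δ / 4) := by
      have := Real.log_le_log (by linarith : (0:ℝ) < δ / 4) (by linarith : δ / 4 ≤ δ)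
      linarith
    calc Real.exp (-2 * T * c ^ 2) ≤ Real.exp (Real.log δ) := by
          rw [Real.exp_le_exp]; linarith
      _ = δ := Real.exp_log hδ0
  -- the empirical variables
  set G' : S × S → ℝ := fun z => ((Pb (φ z.1)) (φ z.2)).toReal with hG'def
  have hG'meas : Measurable G' :=
    (measurable_of_countable (fun q : Sb × Sb => ((Pb q.1) q.2).toReal)).comp
      ((hφ.comp measurable_fst).prodMk (hφ.comp measurable_snd))
  have hn0 : ∀ z, (0 : ℝ) ≤ G' z := fun z => ENNReal.toReal_nonneg
  have hn1 : ∀ z, G' z ≤ 1 := by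
    intro z
    have h := (Pb (φ z.1)).coe_le_one (φ z.2)
    simpa using ENNReal.toReal_mono ENNReal.one_ne_top h
  set Y : Fin T → Ω → ℝ := fun t ω => 1 - G' (Z t ω) with hYdef
  have hYmeas : ∀ t, Measurable (Y t) :=
    fun t => measurable_const.sub (hG'meas.comp (hZmeas t))
  have hY0 : ∀ t ω, 0 ≤ Y t ω := fun t ω => by simp [hYdef, hn1 (Z t ω)]
  have hY1 : ∀ t ω, Y t ω ≤ 1 := fun t ω => by simp [hYdef, hn0 (Z t ω)]
  have hYindep : iIndepFun Y Pr :=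
    hZindep.comp (fun t z => 1 - G' z) (fun t => measurable_const.sub hG'meas)
  -- the empirical complements
  set X : Fin T → Ω → ℝ := fun t ω => G' (Z t ω) with hXdef
  have hXmeas : ∀ t, Measurable (X t) := fun t => hG'meas.comp (hZmeas t)
  have hX0 : ∀ t ω, 0 ≤ X t ω := fun t ω => hn0 (Z t ω)
  have hX1 : ∀ t ω, X t ω ≤ 1 := fun t ω => hn1 (Z t ω)
  have hXindep : iIndepFun X Pr :=
    hZindep.comp (fun t z => G' z) (fun t => hG'meas)
  -- the means
  have hG'int : Integrable G' (ξ.compProd P) :=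
    integrable_of_bdd hG'meas.aestronglyMeasurable (C := 1)
      (fun z => abs_le.mpr ⟨by linarith [hn0 z], hn1 z⟩)
  set q : ℝ := ∫ z, G' z ∂(ξ.compProd P) with hqdef
  set L : ℝ := ∫ z, (1 - G' z) ∂(ξ.compProd P) with hLdef
  have hmeanX : ∀ t, ∫ ω, X t ω ∂Pr = q := by
    intro t
    have h := integral_map (μ := Pr) (hZmeas t).aemeasurable
      (f := G') hG'meas.aestronglyMeasurable
    rw [hZlaw t] at h
    exact h.symm
  have hqL : L = 1 - q := by
    rw [hLdef, hqdef]
    rw [integral_sub (integrable_const 1) hG'int]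
    simp
  -- the value difference bound
  have hD := value_diff_bound P Pb φ hφ ξ hinv γ hγ0 hγ1 Bb V hVmeas hV0 hV1 hVtarget
    hVbellman Vb hVb0 hVb1 hVbtarget hVbbellman
  set D : ℝ := ∫ s, |V s - Vb (φ s)| ∂ξ with hDdef
  -- the bad event
  set B : Set Ω := {ω | (T : ℝ) * c ≤ ∑ t, (X t ω - ∫ x, X t x ∂Pr)} with hBdef
  have hBmeas : MeasurableSet B := by
    apply measurableSet_le measurable_const
    exact Finset.measurable_sum Finset.univ (fun t _ => (hXmeas t).sub_const _)
  have htail : (Pr B).toReal ≤ δ := by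
    calc (Pr B).toReal ≤ Real.exp (-2 * T * c ^ 2) :=
          hoeff_tail Pr hXmeas hX0 hX1 hXindep hc
      _ ≤ δ := hexp
  have htail' : Pr B ≤ ENNReal.ofReal δ :=
    (ENNReal.le_ofReal_iff_toReal_le (measure_ne_top Pr B) hδ0.le).mpr htail
  -- the good event is contained in the target event
  have hkeyc : γ * c / (1 - γ) = γ * ε / (1 + γ * K) := by
    rw [hcdef]
    field_simp
  have hsubset : Bᶜ ⊆ {ω | D ≤
      γ * ((1 / (T : ℝ)) * ∑ t, (1 - G' (Z t ω))) / (1 - γ) + γ * ε / (1 + γ * K)} := by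
    intro ω hω
    simp only [hBdef, Set.mem_compl_iff, Set.mem_setOf_eq, not_le] at hω
    simp only [Set.mem_setOf_eq]
    simp_rw [hmeanX] at hω
    have hsum : ∑ t, (X t ω - q) = (∑ t, X t ω) - T * q := by
      rw [Finset.sum_sub_distrib, Finset.sum_const, Finset.card_univ, Fintype.card_fin,
        nsmul_eq_mul]
    rw [hsum] at hω
    set Lhat : ℝ := (1 / (T : ℝ)) * ∑ t, (1 - G' (Z t ω)) with hLhatdef
    have hSsum : ∑ t, (1 - G' (Z t ω)) = (T : ℝ) - ∑ t, X t ω := by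
      rw [Finset.sum_sub_distrib, Finset.sum_const, Finset.card_univ, Fintype.card_fin,
        nsmul_eq_mul, mul_one]
    set SX : ℝ := ∑ t, X t ω with hSXdef
    -- hω : SX - T * q < T * c
    have hLlow : L - c ≤ Lhat := by
      rw [hLhatdef, hSsum, hqL, mul_comm, mul_one_div, le_div_iff₀ hTR]
      linarith
    have hmul : γ * L ≤ γ * (Lhat + c) := mul_le_mul_of_nonneg_left (by linarith) hγ0
    have hdiv : γ * L / (1 - γ) ≤ γ * (Lhat + c) / (1 - γ) :=
      (div_le_div_iff_of_pos_right h1γ).mpr hmul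
    have hsplit : γ * (Lhat + c) / (1 - γ) = γ * Lhat / (1 - γ) + γ * c / (1 - γ) := by
      ring
    have hD' : D ≤ γ * L / (1 - γ) := hD
    rw [hsplit, hkeyc] at hdiv
    linarith
  calc ENNReal.ofReal (1 - δ) = 1 - ENNReal.ofReal δ := by
        rw [ENNReal.ofReal_sub 1 hδ0.le, ENNReal.ofReal_one]
    _ ≤ 1 - Pr B := tsub_le_tsub_left htail' 1
    _ = Pr Bᶜ := (prob_compl_eq_one_sub hBmeas).symm
    _ ≤ _ := measure_mono hsubset
end

section
/- ∫ |V(s) − V̄(φ(s))| dξ(s) ≤ γ L_P/(1−γ). -/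
open MeasureTheory ProbabilityTheory

section Aux

variable {X : Type*} [MeasurableSpace X]

lemma tvDist_bddAbove [Finite X] (μ ν : Measure X) :
    BddAbove (Set.range fun A : {A : Set X // MeasurableSet A} =>
      |(μ A.1).toReal - (ν A.1).toReal|) := by
  haveI : Finite {A : Set X // MeasurableSet A} := Subtype.finite
  exact (Set.finite_range _).bddAbove

lemma le_tvDist [Finite X] (μ ν : Measure X) {A : Set X} (hA : MeasurableSet A) :
    |(μ A).toReal - (ν A).toReal| ≤ tvDist μ ν :=
  le_ciSup (tvDist_bddAbove μ ν) (⟨A, hA⟩ : {A : Set X // MeasurableSet A})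

lemma tvDist_nonneg [Finite X] (μ ν : Measure X) : 0 ≤ tvDist μ ν := by
  have := le_tvDist μ ν MeasurableSet.empty
  simpa using this

lemma sum_toReal_measure_singleton [Fintype X] [MeasurableSingletonClass X]
    (μ : Measure X) [IsFiniteMeasure μ] (A : Finset X) :
    ∑ y ∈ A, (μ {y}).toReal = (μ (↑A : Set X)).toReal := by
  rw [← ENNReal.toReal_sum (fun y _ => measure_ne_top μ _)]
  congr 1
  have : (↑A : Set X) = ⋃ y ∈ A, ({y} : Set X) := by
    ext x; simp
  rw [this, measure_biUnion_finset ?_ (fun b _ => measurableSet_singleton b)]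
  intro x _ y _ hxy
  simp [Function.onFun, Set.disjoint_singleton, hxy]

/-- Key finite-state lemma: the difference of expectations of a `[0,1]`-valued function
under two probability measures is bounded by the total variation distance. -/
lemma abs_integral_sub_integral_le_tvDist [Fintype X] [MeasurableSingletonClass X]
    (μ ν : Measure X) [IsProbabilityMeasure μ] [IsProbabilityMeasure ν]
    (f : X → ℝ) (hf0 : ∀ x, 0 ≤ f x) (hf1 : ∀ x, f x ≤ 1) :
    |∫ x, f x ∂μ - ∫ x, f x ∂ν| ≤ tvDist μ ν := by
  classical
  rw [integral_fintype (.of_finite), integral_fintype (.of_finite)]; simp only [measureReal_def]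
  simp only [smul_eq_mul, ← Finset.sum_sub_distrib, ← sub_mul]
  set c : X → ℝ := fun y => (μ {y}).toReal - (ν {y}).toReal with hc
  set A : Finset X := Finset.univ.filter (fun y => 0 ≤ c y) with hA
  have hsum : ∀ (B : Finset X), ∑ y ∈ B, c y = (μ (↑B : Set X)).toReal - (ν (↑B : Set X)).toReal := by
    intro B
    rw [Finset.sum_sub_distrib, sum_toReal_measure_singleton, sum_toReal_measure_singleton]
  have habs : ∀ (B : Finset X), ∑ y ∈ B, c y ≤ tvDist μ ν := by
    intro B
    rw [hsum B]
    exact (le_abs_self _).trans (le_tvDist μ ν (by measurability))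
  rw [abs_le]
  constructor
  · -- lower bound: -(tvDist) ≤ ∑ c y * f y
    have h1 : -∑ y, c y * f y ≤ ∑ y ∈ Finset.univ.filter (fun y => ¬ 0 ≤ c y), c y * (-1) := by
      rw [← Finset.sum_neg_distrib]
      rw [← Finset.sum_filter_add_sum_filter_not Finset.univ (fun y => 0 ≤ c y)
        (fun y => -(c y * f y))]
      have hA1 : ∑ y ∈ A, -(c y * f y) ≤ 0 :=
        Finset.sum_nonpos fun y hy => by
          have := (Finset.mem_filter.mp hy).2
          nlinarith [hf0 y]
      have hA2 : ∑ y ∈ Finset.univ.filter (fun y => ¬ 0 ≤ c y), -(c y * f y) ≤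
          ∑ y ∈ Finset.univ.filter (fun y => ¬ 0 ≤ c y), c y * (-1) := by
        refine Finset.sum_le_sum fun y hy => ?_
        have := (Finset.mem_filter.mp hy).2
        nlinarith [hf1 y]
      linarith
    have h2 : ∑ y ∈ Finset.univ.filter (fun y => ¬ 0 ≤ c y), c y * (-1) =
        -∑ y ∈ Finset.univ.filter (fun y => ¬ 0 ≤ c y), c y := by
      simp [Finset.sum_neg_distrib]
    have h3 : -∑ y ∈ Finset.univ.filter (fun y => ¬ 0 ≤ c y), c y ≤ tvDist μ ν := by
      rw [hsum]
      rw [neg_sub]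
      exact (le_abs_self _).trans (by rw [abs_sub_comm]; exact le_tvDist μ ν (by measurability))
    linarith
  · -- upper bound: ∑ c y * f y ≤ tvDist
    have h1 : ∑ y, c y * f y ≤ ∑ y ∈ A, c y := by
      rw [← Finset.sum_filter_add_sum_filter_not Finset.univ (fun y => 0 ≤ c y)
        (fun y => c y * f y)]
      have hA1 : ∑ y ∈ A, c y * f y ≤ ∑ y ∈ A, c y := by
        refine Finset.sum_le_sum fun y hy => ?_
        have := (Finset.mem_filter.mp hy).2
        nlinarith [hf1 y]
      have hA2 : ∑ y ∈ Finset.univ.filter (fun y => ¬ 0 ≤ c y), c y * f y ≤ 0 :=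
        Finset.sum_nonpos fun y hy => by
          have := (Finset.mem_filter.mp hy).2
          nlinarith [hf0 y]
      linarith
    exact h1.trans (habs A)

end Aux

/-- Value-difference bound for discounted reachability: the expected (under the stationary
distribution `ξ`) absolute difference between the ground value function `V` and the latent
value function `Vb` composed with the embedding `φ` is at most `γ·L_P/(1-γ)`, where `L_P`
is the local transition loss. -/
theorem value_difference_reachability
    {S : Type*} [MeasurableSpace S]
    {Sb : Type*} [Fintype Sb] [Nonempty Sb] [MeasurableSpace Sb] [DiscreteMeasurableSpace Sb]
    (P : Kernel S S) [IsMarkovKernel P]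
    (Pb : Sb → PMF Sb)
    (φ : S → Sb) (hφ : Measurable φ)
    (ξ : Measure S) [IsProbabilityMeasure ξ]
    (hinv : ∀ A : Set S, MeasurableSet A → ξ A = ∫⁻ s, P s A ∂ξ)
    (γ : ℝ) (hγ0 : 0 ≤ γ) (hγ1 : γ < 1)
    (Bb : Set Sb)
    (V : S → ℝ) (hVmeas : Measurable V)
    (hV0 : ∀ s, 0 ≤ V s) (hV1 : ∀ s, V s ≤ 1)
    (hVtarget : ∀ s, φ s ∈ Bb → V s = 1)
    (hVbellman : ∀ s, φ s ∉ Bb → V s = γ * ∫ s', V s' ∂(P s))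
    (Vb : Sb → ℝ) (hVb0 : ∀ x, 0 ≤ Vb x) (hVb1 : ∀ x, Vb x ≤ 1)
    (hVbtarget : ∀ x ∈ Bb, Vb x = 1)
    (hVbbellman : ∀ x, x ∉ Bb → Vb x = γ * ∑ y, ((Pb x) y).toReal * Vb y) :
    ∫ s, |V s - Vb (φ s)| ∂ξ ≤
      γ * (∫ s, tvDist ((P s).map φ) ((Pb (φ s)).toMeasure) ∂ξ) / (1 - γ) := by
  classical
  set D : S → ℝ := fun s => |V s - Vb (φ s)| with hD
  set T : S → ℝ := fun s => tvDist ((P s).map φ) ((Pb (φ s)).toMeasure) with hT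
  have hVbmeas : Measurable Vb := measurable_of_countable Vb
  have hDmeas : Measurable D := (hVmeas.sub (hVbmeas.comp hφ)).abs
  have hD0 : ∀ s, 0 ≤ D s := fun s => abs_nonneg _
  have hD1 : ∀ s, D s ≤ 1 := by
    intro s
    rw [abs_le]
    constructor <;> nlinarith [hV0 s, hV1 s, hVb0 (φ s), hVb1 (φ s)]
  -- integrability of D w.r.t. any probability measure
  have hDint : ∀ (μ : Measure S) [IsProbabilityMeasure μ], Integrable D μ := by
    intro μ _
    refine (integrable_const (1 : ℝ)).mono' hDmeas.aestronglyMeasurable ?_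
    filter_upwards with s
    rw [Real.norm_eq_abs, abs_of_nonneg (hD0 s)]
    exact hD1 s
  -- pushforward measures are probability measures
  have hmapP : ∀ s, IsProbabilityMeasure ((P s).map φ) := fun s =>
    Measure.isProbabilityMeasure_map hφ.aemeasurable
  -- T is nonnegative and bounded by 1
  have hT0 : ∀ s, 0 ≤ T s := by
    intro s
    exact tvDist_nonneg _ _
  have hle1 : ∀ (μ : Measure Sb) [IsProbabilityMeasure μ] (A : Set Sb),
      (μ A).toReal ≤ 1 := by
    intro μ _ A
    apply ENNReal.toReal_le_of_le_ofReal one_pos.le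
    simpa using prob_le_one (μ := μ) (s := A)
  have hT1 : ∀ s, T s ≤ 1 := by
    intro s
    refine ciSup_le fun A => ?_
    haveI := hmapP s
    rw [abs_le]
    have h1 := hle1 ((P s).map φ) A.1
    have h2 : (0:ℝ) ≤ (((Pb (φ s)).toMeasure) A.1).toReal := ENNReal.toReal_nonneg
    have h3 := hle1 ((Pb (φ s)).toMeasure) A.1
    have h4 : (0:ℝ) ≤ (((P s).map φ) A.1).toReal := ENNReal.toReal_nonneg
    exact ⟨by linarith, by linarith⟩
  -- measurability of T
  have hTmeas : Measurable T := by
    haveI : Finite {A : Set Sb // MeasurableSet A} := Subtype.finite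
    haveI : Fintype {A : Set Sb // MeasurableSet A} := Fintype.ofFinite _
    haveI : Nonempty {A : Set Sb // MeasurableSet A} := ⟨⟨∅, MeasurableSet.empty⟩⟩
    have : T = Finset.univ.sup' Finset.univ_nonempty
        (fun (A : {A : Set Sb // MeasurableSet A}) (s : S) =>
          |(((P s).map φ) A.1).toReal - (((Pb (φ s)).toMeasure) A.1).toReal|) := by
      funext s
      rw [Finset.sup'_apply, Finset.sup'_univ_eq_ciSup]
      rfl
    rw [this]
    refine Finset.measurable_sup' Finset.univ_nonempty fun A _ => ?_
    have h1 : Measurable fun s => (((P s).map φ) A.1).toReal := by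
      have heq : ∀ s, ((P s).map φ) A.1 = P s (φ ⁻¹' A.1) := fun s => Measure.map_apply hφ A.2
      simp only [heq]
      exact (P.measurable_coe (hφ A.2)).ennreal_toReal
    have h2 : Measurable fun s => (((Pb (φ s)).toMeasure) A.1).toReal :=
      (measurable_of_countable (fun x => (((Pb x).toMeasure) A.1).toReal)).comp hφ
    exact (h1.sub h2).abs
  have hTint : Integrable T ξ := by
    refine (integrable_const (1 : ℝ)).mono' hTmeas.aestronglyMeasurable ?_
    filter_upwards with s
    rw [Real.norm_eq_abs, abs_of_nonneg (hT0 s)]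
    exact hT1 s
  -- the averaged difference function
  set g : S → ℝ := fun s => ∫ s', D s' ∂(P s) with hg
  have hgmeas : Measurable g := by
    have : StronglyMeasurable fun x : S × S => D x.2 :=
      (hDmeas.comp measurable_snd).stronglyMeasurable
    exact (StronglyMeasurable.integral_kernel_prod_right (κ := P)
      (f := fun _ y => D y) this).measurable
  have hg0 : ∀ s, 0 ≤ g s := fun s => integral_nonneg hD0
  have hg1 : ∀ s, g s ≤ 1 := by
    intro s
    calc g s ≤ ∫ _, (1 : ℝ) ∂(P s) := integral_mono (hDint _) (integrable_const 1) hD1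
    _ = 1 := by simp
  have hgint : Integrable g ξ := by
    refine (integrable_const (1 : ℝ)).mono' hgmeas.aestronglyMeasurable ?_
    filter_upwards with s
    rw [Real.norm_eq_abs, abs_of_nonneg (hg0 s)]
    exact hg1 s
  -- invariance: ξ.bind P = ξ
  have hbind : ξ.bind (fun s => (P s : Measure S)) = ξ := by
    refine Measure.ext fun A hA => ?_
    rw [Measure.bind_apply hA P.measurable.aemeasurable]
    exact (hinv A hA).symm
  -- invariance at the level of integrals of D
  have hinvD : ∫ s, g s ∂ξ = ∫ s, D s ∂ξ := by
    have hDof : Measurable fun s => ENNReal.ofReal (D s) := hDmeas.ennreal_ofReal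
    have key : ∫⁻ s, ENNReal.ofReal (D s) ∂ξ
        = ∫⁻ s, ∫⁻ s', ENNReal.ofReal (D s') ∂(P s) ∂ξ := by
      conv_lhs => rw [← hbind]
      exact Measure.lintegral_bind P.measurable.aemeasurable hDof.aemeasurable
    have h1 : ∫ s, D s ∂ξ = (∫⁻ s, ENNReal.ofReal (D s) ∂ξ).toReal := by
      rw [integral_eq_lintegral_of_nonneg_ae (Filter.Eventually.of_forall hD0)
        hDmeas.aestronglyMeasurable]
    have h2 : ∫ s, g s ∂ξ = (∫⁻ s, ENNReal.ofReal (g s) ∂ξ).toReal := by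
      rw [integral_eq_lintegral_of_nonneg_ae (Filter.Eventually.of_forall hg0)
        hgmeas.aestronglyMeasurable]
    have h3 : ∀ s, ENNReal.ofReal (g s) = ∫⁻ s', ENNReal.ofReal (D s') ∂(P s) := by
      intro s
      exact ofReal_integral_eq_lintegral_ofReal (hDint (P s))
        (Filter.Eventually.of_forall hD0)
    rw [h1, h2, key]
    congr 1
    exact lintegral_congr h3
  -- pointwise bound
  have hpt : ∀ s, D s ≤ γ * g s + γ * T s := by
    intro s
    by_cases hs : φ s ∈ Bb
    · have : D s = 0 := by
        simp only [hD, hVtarget s hs, hVbtarget (φ s) hs, sub_self, abs_zero]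
      rw [this]
      have := hg0 s; have := hT0 s
      positivity
    · -- Bellman case
      haveI := hmapP s
      have hVint : Integrable V (P s) := by
        refine (integrable_const (1 : ℝ)).mono' hVmeas.aestronglyMeasurable ?_
        filter_upwards with s'
        rw [Real.norm_eq_abs, abs_of_nonneg (hV0 s')]
        exact hV1 s'
      have hVbφint : Integrable (fun s' => Vb (φ s')) (P s) := by
        refine (integrable_const (1 : ℝ)).mono' ((hVbmeas.comp hφ).aestronglyMeasurable) ?_
        filter_upwards with s'
        rw [Real.norm_eq_abs, abs_of_nonneg (hVb0 (φ s'))]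
        exact hVb1 (φ s')
      have e1 : |∫ s', V s' ∂(P s) - ∫ s', Vb (φ s') ∂(P s)| ≤ g s := by
        rw [← integral_sub hVint hVbφint]
        calc |∫ s', (V s' - Vb (φ s')) ∂(P s)|
            = ‖∫ s', (V s' - Vb (φ s')) ∂(P s)‖ := (Real.norm_eq_abs _).symm
          _ ≤ ∫ s', ‖V s' - Vb (φ s')‖ ∂(P s) := norm_integral_le_integral_norm _
          _ = g s := by simp [hg, hD, Real.norm_eq_abs]
      have e2 : ∫ s', Vb (φ s') ∂(P s) = ∫ y, Vb y ∂((P s).map φ) :=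
        (integral_map hφ.aemeasurable hVbmeas.aestronglyMeasurable).symm
      have e3 : ∑ y, ((Pb (φ s)) y).toReal * Vb y = ∫ y, Vb y ∂((Pb (φ s)).toMeasure) := by
        rw [integral_fintype (.of_finite)]; simp only [measureReal_def]
        refine Finset.sum_congr rfl fun y _ => ?_
        rw [smul_eq_mul, PMF.toMeasure_apply_singleton _ _ (measurableSet_singleton y)]
      have e4 : |∫ y, Vb y ∂((P s).map φ) - ∫ y, Vb y ∂((Pb (φ s)).toMeasure)| ≤ T s :=
        abs_integral_sub_integral_le_tvDist _ _ Vb hVb0 hVb1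
      have key : |(∫ s', V s' ∂(P s)) - ∑ y, ((Pb (φ s)) y).toReal * Vb y| ≤ g s + T s := by
        rw [e3]
        calc |(∫ s', V s' ∂(P s)) - ∫ y, Vb y ∂((Pb (φ s)).toMeasure)|
            = |((∫ s', V s' ∂(P s)) - ∫ s', Vb (φ s') ∂(P s))
              + ((∫ s', Vb (φ s') ∂(P s)) - ∫ y, Vb y ∂((Pb (φ s)).toMeasure))| := by ring_nf
          _ ≤ |(∫ s', V s' ∂(P s)) - ∫ s', Vb (φ s') ∂(P s)|
              + |(∫ s', Vb (φ s') ∂(P s)) - ∫ y, Vb y ∂((Pb (φ s)).toMeasure)| := abs_add_le _ _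
          _ ≤ g s + T s := by
              refine add_le_add e1 ?_
              rw [e2]; exact e4
      calc D s = |γ * (∫ s', V s' ∂(P s)) - γ * ∑ y, ((Pb (φ s)) y).toReal * Vb y| := by
            rw [hD]
            simp only
            rw [hVbellman s hs, hVbbellman (φ s) hs]
        _ = γ * |(∫ s', V s' ∂(P s)) - ∑ y, ((Pb (φ s)) y).toReal * Vb y| := by
            rw [← mul_sub, abs_mul, abs_of_nonneg hγ0]
        _ ≤ γ * (g s + T s) := by
            exact mul_le_mul_of_nonneg_left key hγ0
        _ = γ * g s + γ * T s := by ring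
  -- integrate the pointwise bound
  have hmain : ∫ s, D s ∂ξ ≤ γ * ∫ s, g s ∂ξ + γ * ∫ s, T s ∂ξ := by
    calc ∫ s, D s ∂ξ ≤ ∫ s, (γ * g s + γ * T s) ∂ξ :=
          integral_mono (hDint ξ) ((hgint.const_mul γ).add (hTint.const_mul γ)) hpt
      _ = γ * ∫ s, g s ∂ξ + γ * ∫ s, T s ∂ξ := by
          rw [integral_add (hgint.const_mul γ) (hTint.const_mul γ),
            integral_const_mul, integral_const_mul]
  rw [hinvD] at hmain
  have hpos : (0 : ℝ) < 1 - γ := by linarith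
  rw [le_div_iff₀ hpos]
  nlinarith [hmain]
end

section
/- Suppose in addition that singletons of S are measurable and that V̄ is K-Lipschitz-valued. If s₁, s₂ ∈ S satisfy φ(s₁) = φ(s₂), ξ({s₁}) > 0 and ξ({s₂}) > 0, then |V(s₁) − V(s₂)| ≤ ((L_R + γ K L_P)/(1−γ)) · (ξ({s₁})⁻¹ + ξ({s₂})⁻¹). -/
open MeasureTheory ProbabilityTheory

set_option linter.unusedSectionVars false
set_option maxHeartbeats 1000000

section Helpers

variable {Sb : Type*} [Fintype Sb] [Nonempty Sb] [MeasurableSpace Sb] [DiscreteMeasurableSpace Sb]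

lemma tvDist_comm {X : Type*} [MeasurableSpace X] (μ ν : Measure X) :
    tvDist μ ν = tvDist ν μ := by
  unfold tvDist
  congr 1; ext A; rw [abs_sub_comm]

lemma abs_le_tvDist (μ ν : Measure Sb) {A : Set Sb} (hA : MeasurableSet A) :
    |(μ A).toReal - (ν A).toReal| ≤ tvDist μ ν :=
  le_ciSup (f := fun A : {A : Set Sb // MeasurableSet A} => |(μ A.1).toReal - (ν A.1).toReal|)
    (Set.Finite.bddAbove (Set.finite_range _)) ⟨A, hA⟩

lemma measure_finset_toReal (μ : Measure Sb) [IsFiniteMeasure μ] (A : Finset Sb) :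
    (μ (↑A : Set Sb)).toReal = ∑ x ∈ A, (μ {x}).toReal := by
  rw [show (↑A : Set Sb) = ⋃ x ∈ A, {x} by ext y; simp,
    measure_biUnion_finset (by simp [Set.PairwiseDisjoint, Set.Pairwise, Function.onFun])
      (fun _ _ => measurableSet_singleton _),
    ENNReal.toReal_sum (fun a _ => measure_ne_top μ _)]

lemma integral_fintype_eq_sum (μ : Measure Sb) [IsFiniteMeasure μ] (f : Sb → ℝ) :
    ∫ x, f x ∂μ = ∑ x, (μ {x}).toReal * f x := by
  rw [integral_fintype (Integrable.of_finite)]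
  simp [smul_eq_mul, Measure.real]

lemma sum_singleton_toReal (μ : Measure Sb) [IsProbabilityMeasure μ] :
    ∑ x, (μ {x}).toReal = 1 := by
  have := measure_finset_toReal μ Finset.univ
  simp at this
  simpa using this.symm

lemma integral_sub_le_tv (μ ν : Measure Sb) [IsProbabilityMeasure μ] [IsProbabilityMeasure ν]
    (f : Sb → ℝ) (K : ℝ) (hK : ∀ x y, |f x - f y| ≤ K) :
    (∫ x, f x ∂μ) - (∫ x, f x ∂ν) ≤ K * tvDist μ ν := by
  classical
  obtain ⟨x₀, -, hx₀⟩ := Finset.exists_min_image Finset.univ f ⟨Classical.arbitrary Sb, Finset.mem_univ _⟩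
  set p : Sb → ℝ := fun x => (μ {x}).toReal with hp
  set q : Sb → ℝ := fun x => (ν {x}).toReal with hq
  have hsum : ∑ x, (p x - q x) = 0 := by
    rw [Finset.sum_sub_distrib, sum_singleton_toReal μ, sum_singleton_toReal ν]; ring
  set A : Finset Sb := Finset.univ.filter (fun x => q x < p x) with hA
  have hInt : (∫ x, f x ∂μ) - (∫ x, f x ∂ν) = ∑ x, (p x - q x) * f x := by
    rw [integral_fintype_eq_sum, integral_fintype_eq_sum, ← Finset.sum_sub_distrib]
    exact Finset.sum_congr rfl fun x _ => by ring
  have hshift : ∑ x, (p x - q x) * f x = ∑ x, (p x - q x) * (f x - f x₀) := by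
    have : ∑ x, (p x - q x) * (f x - f x₀)
        = ∑ x, (p x - q x) * f x - (∑ x, (p x - q x)) * f x₀ := by
      rw [Finset.sum_mul, ← Finset.sum_sub_distrib]
      exact Finset.sum_congr rfl fun x _ => by ring
    rw [this, hsum]; ring
  have hfK : ∀ x, 0 ≤ f x - f x₀ ∧ f x - f x₀ ≤ K := by
    intro x
    have h1 : f x₀ ≤ f x := hx₀ x (Finset.mem_univ x)
    have h2 : |f x - f x₀| ≤ K := hK x x₀
    rw [abs_le] at h2
    exact ⟨by linarith, by linarith⟩
  have hdrop : ∑ x, (p x - q x) * (f x - f x₀) ≤ ∑ x ∈ A, (p x - q x) * (f x - f x₀) := by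
    rw [← Finset.sum_filter_add_sum_filter_not Finset.univ (fun x => q x < p x)]
    have : ∑ x ∈ Finset.univ.filter (fun x => ¬ q x < p x), (p x - q x) * (f x - f x₀) ≤ 0 := by
      apply Finset.sum_nonpos
      intro x hx
      simp only [Finset.mem_filter, not_lt] at hx
      exact mul_nonpos_of_nonpos_of_nonneg (by linarith [hx.2]) (hfK x).1
    simp only [hA]
    linarith
  have hKsum : ∑ x ∈ A, (p x - q x) * (f x - f x₀) ≤ K * ∑ x ∈ A, (p x - q x) := by
    rw [Finset.mul_sum]
    apply Finset.sum_le_sum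
    intro x hx
    simp only [hA, Finset.mem_filter] at hx
    have h1 : 0 ≤ p x - q x := by linarith [hx.2]
    calc (p x - q x) * (f x - f x₀) ≤ (p x - q x) * K :=
          mul_le_mul_of_nonneg_left (hfK x).2 h1
      _ = K * (p x - q x) := by ring
  have hAtv : ∑ x ∈ A, (p x - q x) ≤ tvDist μ ν := by
    have h1 : ∑ x ∈ A, (p x - q x) = (μ (↑A : Set Sb)).toReal - (ν (↑A : Set Sb)).toReal := by
      rw [measure_finset_toReal, measure_finset_toReal, Finset.sum_sub_distrib]
    rw [h1]
    exact (le_abs_self _).trans (abs_le_tvDist μ ν MeasurableSet.of_discrete)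
  have hK0 : 0 ≤ K := by have := hK x₀ x₀; simpa using le_trans (abs_nonneg _) this
  calc (∫ x, f x ∂μ) - (∫ x, f x ∂ν) = ∑ x, (p x - q x) * (f x - f x₀) := by rw [hInt, hshift]
    _ ≤ ∑ x ∈ A, (p x - q x) * (f x - f x₀) := hdrop
    _ ≤ K * ∑ x ∈ A, (p x - q x) := hKsum
    _ ≤ K * tvDist μ ν := mul_le_mul_of_nonneg_left hAtv hK0

lemma abs_integral_sub_le_tv (μ ν : Measure Sb) [IsProbabilityMeasure μ] [IsProbabilityMeasure ν]
    (f : Sb → ℝ) (K : ℝ) (hK : ∀ x y, |f x - f y| ≤ K) :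
    |(∫ x, f x ∂μ) - (∫ x, f x ∂ν)| ≤ K * tvDist μ ν := by
  rw [abs_sub_le_iff]
  refine ⟨integral_sub_le_tv μ ν f K hK, ?_⟩
  rw [tvDist_comm]
  exact integral_sub_le_tv ν μ f K hK

end Helpers

lemma lintegral_invariant {S : Type*} [MeasurableSpace S] (P : Kernel S S) [IsMarkovKernel P]
    (ξ : Measure S) [IsProbabilityMeasure ξ]
    (hinv : ∀ A : Set S, MeasurableSet A → ξ A = ∫⁻ s, P s A ∂ξ)
    (g : S → ENNReal) (hg : Measurable g) :
    ∫⁻ s, g s ∂ξ = ∫⁻ s, ∫⁻ s', g s' ∂(P s) ∂ξ := by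
  have hξ : ξ = ξ.bind (fun s => P s) := by
    ext A hA
    rw [Measure.bind_apply hA P.measurable.aemeasurable]
    exact hinv A hA
  conv_lhs => rw [hξ]
  exact Measure.lintegral_bind P.measurable.aemeasurable hg.aemeasurable

/-- Abstraction-quality bound for discounted return: if the latent value function `Vb` is
`K`-Lipschitz-valued, two states with the same embedding and positive stationary mass have
discounted-return values within `((L_R + γ·K·L_P)/(1-γ))·(ξ{s₁}⁻¹ + ξ{s₂}⁻¹)` of each other. -/
theorem value_closeness_return
    {S : Type*} [MeasurableSpace S] [MeasurableSingletonClass S]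
    {Sb : Type*} [Fintype Sb] [Nonempty Sb] [MeasurableSpace Sb] [DiscreteMeasurableSpace Sb]
    (P : Kernel S S) [IsMarkovKernel P]
    (Pb : Sb → PMF Sb)
    (φ : S → Sb) (hφ : Measurable φ)
    (ξ : Measure S) [IsProbabilityMeasure ξ]
    (hinv : ∀ A : Set S, MeasurableSet A → ξ A = ∫⁻ s, P s A ∂ξ)
    (γ : ℝ) (hγ0 : 0 ≤ γ) (hγ1 : γ < 1)
    (r : S → ℝ) (hrmeas : Measurable r) (hrbdd : ∃ C, ∀ s, |r s| ≤ C)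
    (rb : Sb → ℝ)
    (V : S → ℝ) (hVmeas : Measurable V) (hVbdd : ∃ C, ∀ s, |V s| ≤ C)
    (hVbellman : ∀ s, V s = r s + γ * ∫ s', V s' ∂(P s))
    (Vb : Sb → ℝ)
    (hVbbellman : ∀ x, Vb x = rb x + γ * ∑ y, ((Pb x) y).toReal * Vb y)
    (K : ℝ) (hK : ∀ x y, |Vb x - Vb y| ≤ K)
    (s₁ s₂ : S) (hφeq : φ s₁ = φ s₂)
    (hs₁ : 0 < ξ {s₁}) (hs₂ : 0 < ξ {s₂}) :
    |V s₁ - V s₂| ≤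
      (((∫ s, |r s - rb (φ s)| ∂ξ) +
          γ * K * (∫ s, tvDist ((P s).map φ) ((Pb (φ s)).toMeasure) ∂ξ)) / (1 - γ)) *
        ((ξ {s₁}).toReal⁻¹ + (ξ {s₂}).toReal⁻¹) := by
  classical
  obtain ⟨Cv, hCv⟩ := hVbdd
  have hVbmeas : Measurable Vb := Measurable.of_discrete
  obtain ⟨Mb, hMb⟩ : ∃ M, ∀ x, |Vb x| ≤ M := by
    obtain ⟨M, hM⟩ := (Set.finite_range fun x : Sb => |Vb x|).bddAbove
    exact ⟨M, fun x => hM (Set.mem_range_self x)⟩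
  obtain ⟨Cr, hCr⟩ := hrbdd
  obtain ⟨Mrb, hMrb⟩ : ∃ M, ∀ x, |rb x| ≤ M := by
    obtain ⟨M, hM⟩ := (Set.finite_range fun x : Sb => |rb x|).bddAbove
    exact ⟨M, fun x => hM (Set.mem_range_self x)⟩
  set h : S → ℝ := fun s => |V s - Vb (φ s)| with hh_def
  set tv : S → ℝ := fun s => tvDist ((P s).map φ) ((Pb (φ s)).toMeasure) with htv_def
  set Ch : ℝ := Cv + Mb with hCh_def
  have hhmeas : Measurable h := (hVmeas.sub (hVbmeas.comp hφ)).abs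
  have habs_sub : ∀ a b : ℝ, |a - b| ≤ |a| + |b| := by
    intro a b
    calc |a - b| = |a + (-b)| := by rw [sub_eq_add_neg]
      _ ≤ |a| + |(-b)| := abs_add_le _ _
      _ = |a| + |b| := by rw [abs_neg]
  have hh : ∀ s, |h s| ≤ Ch := by
    intro s
    rw [hh_def]
    simp only [abs_abs]
    exact (habs_sub _ _).trans (add_le_add (hCv s) (hMb (φ s)))
  have hhnn : ∀ s, 0 ≤ h s := fun s => abs_nonneg _
  -- integrability helper
  have intbdd : ∀ (μ : Measure S) [IsFiniteMeasure μ] (f : S → ℝ) (C : ℝ),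
      Measurable f → (∀ s, |f s| ≤ C) → Integrable f μ := by
    intro μ _ f C hf hC
    exact (integrable_const C).mono' hf.aestronglyMeasurable
      (ae_of_all _ (by simpa [Real.norm_eq_abs] using hC))
  -- pointwise key inequality
  have hPMFint : ∀ x : Sb, ∫ y, Vb y ∂((Pb x).toMeasure) = ∑ y, ((Pb x) y).toReal * Vb y := by
    intro x
    rw [integral_fintype_eq_sum]
    refine Finset.sum_congr rfl fun y _ => ?_
    rw [PMF.toMeasure_apply_singleton _ _ (measurableSet_singleton y)]
  have hmap : ∀ s, ∫ x, Vb x ∂((P s).map φ) = ∫ s', Vb (φ s') ∂(P s) := fun s =>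
    integral_map hφ.aemeasurable hVbmeas.aestronglyMeasurable
  have key : ∀ s, h s ≤ |r s - rb (φ s)| + γ * K * tv s + γ * ∫ s', h s' ∂(P s) := by
    intro s
    haveI : IsProbabilityMeasure ((P s).map φ) := Measure.isProbabilityMeasure_map hφ.aemeasurable
    have intV : Integrable V (P s) := intbdd _ _ _ hVmeas hCv
    have intVb : Integrable (fun s' => Vb (φ s')) (P s) :=
      intbdd _ _ _ (hVbmeas.comp hφ) (fun s' => hMb (φ s'))
    have hsub : ∫ s', V s' ∂(P s) - ∫ s', Vb (φ s') ∂(P s)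
        = ∫ s', (V s' - Vb (φ s')) ∂(P s) := (integral_sub intV intVb).symm
    have habs : |∫ s', (V s' - Vb (φ s')) ∂(P s)| ≤ ∫ s', h s' ∂(P s) := by
      simpa [hh_def, Real.norm_eq_abs] using
        norm_integral_le_integral_norm (μ := P s) (fun s' => V s' - Vb (φ s'))
    have hc : |(∫ s', Vb (φ s') ∂(P s)) - ∑ y, ((Pb (φ s)) y).toReal * Vb y| ≤ K * tv s := by
      rw [← hmap s, ← hPMFint (φ s)]
      exact abs_integral_sub_le_tv _ _ Vb K hK
    have hdecomp : V s - Vb (φ s) = (r s - rb (φ s))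
        + γ * (∫ s', (V s' - Vb (φ s')) ∂(P s))
        + γ * ((∫ s', Vb (φ s') ∂(P s)) - ∑ y, ((Pb (φ s)) y).toReal * Vb y) := by
      rw [hVbellman s, hVbbellman (φ s), ← hsub]; ring
    have h1 : h s ≤ |r s - rb (φ s)| + γ * |∫ s', (V s' - Vb (φ s')) ∂(P s)|
        + γ * |(∫ s', Vb (φ s') ∂(P s)) - ∑ y, ((Pb (φ s)) y).toReal * Vb y| := by
      rw [hh_def]
      simp only []
      rw [hdecomp]
      refine (abs_add_three _ _ _).trans ?_
      rw [abs_mul γ, abs_mul γ, abs_of_nonneg hγ0]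
    have h2 : γ * |∫ s', (V s' - Vb (φ s')) ∂(P s)| ≤ γ * ∫ s', h s' ∂(P s) :=
      mul_le_mul_of_nonneg_left habs hγ0
    have h3 : γ * |(∫ s', Vb (φ s') ∂(P s)) - ∑ y, ((Pb (φ s)) y).toReal * Vb y|
        ≤ γ * (K * tv s) := mul_le_mul_of_nonneg_left hc hγ0
    calc h s ≤ _ := h1
      _ ≤ |r s - rb (φ s)| + γ * ∫ s', h s' ∂(P s) + γ * (K * tv s) := by linarith
      _ = |r s - rb (φ s)| + γ * K * tv s + γ * ∫ s', h s' ∂(P s) := by ring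
  -- measurability of tv
  have htvmeas : Measurable tv := by
    rw [htv_def]
    unfold tvDist
    apply Measurable.iSup
    rintro ⟨A, hA⟩
    simp only [Measure.map_apply hφ hA]
    exact ((ENNReal.measurable_toReal.comp (P.measurable_coe (hφ hA))).sub
      ((Measurable.of_discrete (f := fun x : Sb => (((Pb x).toMeasure) A).toReal)).comp hφ)).abs
  have hmeas_le_one : ∀ (μ : Measure Sb) [IsProbabilityMeasure μ] (A : Set Sb),
      (μ A).toReal ≤ 1 := by
    intro μ _ A
    have : μ A ≤ 1 := prob_le_one
    exact ENNReal.toReal_le_of_le_ofReal zero_le_one (by simpa using this)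
  have htv01 : ∀ s, 0 ≤ tv s ∧ tv s ≤ 1 := by
    intro s
    haveI : IsProbabilityMeasure ((P s).map φ) := Measure.isProbabilityMeasure_map hφ.aemeasurable
    constructor
    · have := abs_le_tvDist ((P s).map φ) ((Pb (φ s)).toMeasure) MeasurableSet.empty
      rw [htv_def]; simpa using this
    · rw [htv_def]
      refine ciSup_le fun A => ?_
      rw [abs_le]
      have h1 := hmeas_le_one ((P s).map φ) A.1
      have h2 := hmeas_le_one ((Pb (φ s)).toMeasure) A.1
      have h3 : (0:ℝ) ≤ (((P s).map φ) A.1).toReal := ENNReal.toReal_nonneg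
      have h4 : (0:ℝ) ≤ (((Pb (φ s)).toMeasure) A.1).toReal := ENNReal.toReal_nonneg
      constructor <;> linarith
  -- invariance: ∫ (∫ h dP) dξ = ∫ h dξ
  set G : S → ENNReal := fun s => ∫⁻ s', ENNReal.ofReal (h s') ∂(P s) with hG_def
  have hGmeas : Measurable G := Measurable.lintegral_kernel (ENNReal.measurable_ofReal.comp hhmeas)
  have hGle : ∀ s, G s ≤ ENNReal.ofReal Ch := by
    intro s
    rw [hG_def]
    calc ∫⁻ s', ENNReal.ofReal (h s') ∂(P s)
        ≤ ∫⁻ _, ENNReal.ofReal Ch ∂(P s) :=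
          lintegral_mono fun s' => ENNReal.ofReal_le_ofReal ((le_abs_self _).trans (hh s'))
      _ = ENNReal.ofReal Ch := by simp
  have hgG : ∀ s, (∫ s', h s' ∂(P s)) = (G s).toReal := fun s =>
    integral_eq_lintegral_of_nonneg_ae (ae_of_all _ hhnn) hhmeas.aestronglyMeasurable
  have hgD : ∫ s, (∫ s', h s' ∂(P s)) ∂ξ = ∫ s, h s ∂ξ := by
    simp only [hgG]
    rw [integral_toReal hGmeas.aemeasurable
      (ae_of_all _ fun s => lt_of_le_of_lt (hGle s) ENNReal.ofReal_lt_top)]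
    rw [integral_eq_lintegral_of_nonneg_ae (ae_of_all _ hhnn) hhmeas.aestronglyMeasurable]
    congr 1
    exact (lintegral_invariant P ξ hinv (fun s => ENNReal.ofReal (h s))
      (ENNReal.measurable_ofReal.comp hhmeas)).symm
  -- integrabilities over ξ
  have int_h : Integrable h ξ := intbdd _ _ _ hhmeas hh
  have int_r : Integrable (fun s => |r s - rb (φ s)|) ξ := by
    refine intbdd _ _ (Cr + Mrb) ((hrmeas.sub (Measurable.of_discrete.comp hφ)).abs) fun s => ?_
    rw [abs_abs]
    exact (habs_sub _ _).trans (add_le_add (hCr s) (hMrb (φ s)))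
  have int_tv : Integrable tv ξ := by
    refine intbdd _ _ 1 htvmeas fun s => ?_
    rw [abs_of_nonneg (htv01 s).1]; exact (htv01 s).2
  have int_g : Integrable (fun s => ∫ s', h s' ∂(P s)) ξ := by
    refine intbdd _ _ Ch ?_ fun s => ?_
    · simp only [hgG]
      exact ENNReal.measurable_toReal.comp hGmeas
    · rw [abs_of_nonneg (integral_nonneg hhnn)]
      calc ∫ s', h s' ∂(P s) ≤ ∫ _, Ch ∂(P s) :=
            integral_mono (intbdd _ _ _ hhmeas hh) (integrable_const _)
              (fun s' => (le_abs_self _).trans (hh s'))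
        _ = Ch := by simp
  -- main expectation bound
  have hmono : ∫ s, h s ∂ξ
      ≤ ∫ s, (|r s - rb (φ s)| + γ * K * tv s + γ * ∫ s', h s' ∂(P s)) ∂ξ :=
    integral_mono int_h ((int_r.add (int_tv.const_mul (γ * K))).add (int_g.const_mul γ)) key
  have int_tv' : Integrable (fun s => γ * K * tv s) ξ := int_tv.const_mul (γ * K)
  have int_g' : Integrable (fun s => γ * ∫ s', h s' ∂(P s)) ξ := int_g.const_mul γ
  have int_rtv : Integrable (fun s => |r s - rb (φ s)| + γ * K * tv s) ξ := int_r.add int_tv'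
  rw [integral_add int_rtv int_g', integral_add int_r int_tv',
    integral_const_mul, integral_const_mul, hgD] at hmono
  have hγ' : 0 < 1 - γ := by linarith
  have hDB : ∫ s, h s ∂ξ
      ≤ ((∫ s, |r s - rb (φ s)| ∂ξ) + γ * K * (∫ s, tv s ∂ξ)) / (1 - γ) := by
    rw [le_div_iff₀ hγ']
    nlinarith [hmono]
  -- singleton bound
  have hsing : ∀ s0 : S, 0 < ξ {s0} → h s0 ≤ (∫ s, h s ∂ξ) * (ξ {s0}).toReal⁻¹ := by
    intro s0 hs0
    have hpos : 0 < (ξ {s0}).toReal := ENNReal.toReal_pos hs0.ne' (measure_ne_top ξ _)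
    have h2 : ∫ s in ({s0} : Set S), h s ∂ξ ≤ ∫ s, h s ∂ξ :=
      setIntegral_le_integral int_h (ae_of_all _ hhnn)
    have h3 : ∫ s in ({s0} : Set S), h s ∂ξ = (ξ {s0}).toReal * h s0 := by
      rw [Measure.restrict_singleton, integral_smul_measure, integral_dirac, smul_eq_mul]
    rw [h3] at h2
    calc h s0 = ((ξ {s0}).toReal * h s0) * (ξ {s0}).toReal⁻¹ := by field_simp
      _ ≤ (∫ s, h s ∂ξ) * (ξ {s0}).toReal⁻¹ :=
          mul_le_mul_of_nonneg_right h2 (inv_nonneg.mpr hpos.le)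
  have htri : |V s₁ - V s₂| ≤ h s₁ + h s₂ := by
    have e : V s₁ - V s₂ = (V s₁ - Vb (φ s₁)) - (V s₂ - Vb (φ s₂)) := by rw [hφeq]; ring
    rw [e]
    exact habs_sub _ _
  have hinvnn : 0 ≤ (ξ {s₁}).toReal⁻¹ + (ξ {s₂}).toReal⁻¹ := by positivity
  calc |V s₁ - V s₂| ≤ h s₁ + h s₂ := htri
    _ ≤ (∫ s, h s ∂ξ) * (ξ {s₁}).toReal⁻¹ + (∫ s, h s ∂ξ) * (ξ {s₂}).toReal⁻¹ :=
        add_le_add (hsing s₁ hs₁) (hsing s₂ hs₂)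
    _ = (∫ s, h s ∂ξ) * ((ξ {s₁}).toReal⁻¹ + (ξ {s₂}).toReal⁻¹) := by ring
    _ ≤ (((∫ s, |r s - rb (φ s)| ∂ξ) + γ * K * (∫ s, tv s ∂ξ)) / (1 - γ)) *
          ((ξ {s₁}).toReal⁻¹ + (ξ {s₂}).toReal⁻¹) :=
        mul_le_mul_of_nonneg_right hDB hinvnn
end
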